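/- Baldwin–Saxl: Let G be a group and (H_i : i ∈ I_f) a finite family of subgroups of G belonging to a family S of subsets of G. Suppose the dual family {x ∈ G ↦ which sets of S contain x} has VC-dimension at most k, i.e., the family of sets S_x = {S ∈ S : x ∈ S} indexed by x ∈ G shatters no (k+1)-element subset of S. Then there exist i₁,…,i_k ∈ I_f such that ⋂_{i ∈ I_f} H_i = H_{i₁} ∩ ⋯ ∩ H_{i_k}. -/

import Mathlib

private lemma listProd_mem_iff_aux {G : Type*} [Group G] (K : Subgroup G)
    {ι : Type*} (f : ι → G) {l : List ι} {i : ι} (hil : i ∈ l) (hnd : l.Nodup)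
    (h : ∀ j ∈ l, j ≠ i → f j ∈ K) :
    (l.map f).prod ∈ K ↔ f i ∈ K := by
  obtain ⟨s, t, rfl⟩ := List.append_of_mem hil
  rw [List.nodup_append] at hnd
  have his : i ∉ s := fun hs => hnd.2.2 i hs i List.mem_cons_self rfl
  have hit : i ∉ t := (List.nodup_cons.1 hnd.2.1).1
  have hs : (s.map f).prod ∈ K := by
    refine list_prod_mem ?_
    intro x hx
    obtain ⟨j, hj, rfl⟩ := List.mem_map.1 hx
    exact h j (by simp [hj]) (by rintro rfl; exact his hj)
  have ht : (t.map f).prod ∈ K := by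
    refine list_prod_mem ?_
    intro x hx
    obtain ⟨j, hj, rfl⟩ := List.mem_map.1 hx
    exact h j (by simp [hj]) (by rintro rfl; exact hit hj)
  rw [List.map_append, List.prod_append, List.map_cons, List.prod_cons]
  constructor
  · intro hP
    have key := mul_mem (mul_mem (inv_mem hs) hP) (inv_mem ht)
    have : ((s.map f).prod)⁻¹ * ((s.map f).prod * (f i * (t.map f).prod)) *
        ((t.map f).prod)⁻¹ = f i := by group
    rwa [this] at key
  · intro hfi
    exact mul_mem hs (mul_mem hfi ht)

/-- Baldwin–Saxl: if the dual set system of a finite family of subgroups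
`(H i : i ∈ ι)` of a group `G` has VC-dimension at most `k` (i.e. no
`(k+1)`-element set of indices is shattered by the sets `{i | x ∈ H i}`,
`x ∈ G`), then the intersection of the whole family equals the intersection of
some `k` of them. -/
theorem baldwin_saxl
    (G : Type*) [Group G] (ι : Type*) [Fintype ι] (H : ι → Subgroup G) (k : ℕ)
    (hVC : ∀ A : Finset ι, A.card = k + 1 →
      ¬ (∀ B ∈ A.powerset, ∃ x : G, ∀ i ∈ A, (x ∈ H i ↔ i ∈ B))) :
    ∃ s : Finset ι, s.card ≤ k ∧ (⨅ i, H i) = ⨅ i ∈ s, H i := by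
  classical
  obtain ⟨s, hsmem, hsmin⟩ := Finset.exists_min_image
    (Finset.univ.powerset.filter (fun t => (⨅ i ∈ t, H i) = ⨅ i, H i)) Finset.card
    ⟨Finset.univ, by simp⟩
  rw [Finset.mem_filter] at hsmem
  have hsP : (⨅ i ∈ s, H i) = ⨅ i, H i := hsmem.2
  refine ⟨s, ?_, hsP.symm⟩
  by_contra hcard
  push_neg at hcard
  obtain ⟨A, hAs, hAcard⟩ := Finset.exists_subset_card_eq (Nat.succ_le_of_lt hcard)
  refine hVC A hAcard ?_
  have key : ∀ i ∈ A, ∃ x : G, x ∉ H i ∧ ∀ j ∈ s, j ≠ i → x ∈ H j := by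
    intro i hiA
    have his : i ∈ s := hAs hiA
    have hlt : (s.erase i).card < s.card := Finset.card_erase_lt_of_mem his
    have hne : ¬ ((⨅ j ∈ s.erase i, H j) = ⨅ i, H i) := by
      intro hp
      have := hsmin (s.erase i) (Finset.mem_filter.2
        ⟨Finset.mem_powerset.2 (Finset.subset_univ _), hp⟩)
      omega
    have hle : (⨅ j ∈ s, H j) ≤ ⨅ j ∈ s.erase i, H j := by
      refine le_iInf fun j => le_iInf fun hj => ?_
      exact iInf_le_of_le j (iInf_le_of_le (Finset.mem_of_mem_erase hj) le_rfl)
    have hlt' : (⨅ j ∈ s, H j) < ⨅ j ∈ s.erase i, H j := by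
      refine lt_of_le_of_ne hle fun heq => hne ?_
      rw [← heq, hsP]
    obtain ⟨x, hx1, hx2⟩ := SetLike.exists_of_lt hlt'
    refine ⟨x, ?_, ?_⟩
    · intro hxi
      apply hx2
      simp only [Subgroup.mem_iInf] at hx1 ⊢
      intro j hj
      rcases eq_or_ne j i with rfl | hne'
      · exact hxi
      · exact hx1 j (Finset.mem_erase.2 ⟨hne', hj⟩)
    · intro j hj hne'
      simp only [Subgroup.mem_iInf] at hx1
      exact hx1 j (Finset.mem_erase.2 ⟨hne', hj⟩)
  choose! f hf1 hf2 using key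
  intro B hB
  rw [Finset.mem_powerset] at hB
  refine ⟨(((A \ B).toList).map f).prod, ?_⟩
  intro i hiA
  by_cases hiB : i ∈ B
  · simp only [hiB, iff_true]
    refine list_prod_mem ?_
    intro x hx
    obtain ⟨j, hj, rfl⟩ := List.mem_map.1 hx
    rw [Finset.mem_toList, Finset.mem_sdiff] at hj
    exact hf2 j hj.1 i (hAs hiA) (fun h => hj.2 (h ▸ hiB))
  · have hil : i ∈ (A \ B).toList := by
      rw [Finset.mem_toList, Finset.mem_sdiff]; exact ⟨hiA, hiB⟩
    have := listProd_mem_iff_aux (H i) f hil (Finset.nodup_toList _) ?_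
    · simp only [hiB, iff_false]
      intro hmem
      exact hf1 i hiA (this.1 hmem)
    · intro j hj hne'
      rw [Finset.mem_toList, Finset.mem_sdiff] at hj
      exact hf2 j hj.1 i (hAs hiA) hne'.symm
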